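/- For every integer n ≥ 1 and every real x with x ≠ −1, q_n(x) = (x+1)^{n} · B_n((x−1)/(x+1)). -/

import Mathlib

open Polynomial Finset

/-- The alternating derivative polynomials for tangent: `p 0 = X`,
`p (n+1) = (X^2 - 1) * (p n)'`. -/
noncomputable def p : ℕ → Polynomial ℝ
  | 0 => X
  | n + 1 => (X ^ 2 - 1) * derivative (p n)

/-- The alternating derivative polynomials for secant: `q 0 = 1`,
`q (n+1) = 2(X^2 - 1) * (q n)' + 2X * q n`. -/
noncomputable def q : ℕ → Polynomial ℝ
  | 0 => 1
  | n + 1 => 2 * (X ^ 2 - 1) * derivative (q n) + 2 * X * q n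

/-- The type `B` Eulerian polynomials: `B 0 = 1`,
`B n = (2nX + 1 - X)*(B (n-1)) + 2X*(1-X)*(B (n-1))'` for `n ≥ 1`. -/
noncomputable def B : ℕ → Polynomial ℝ
  | 0 => 1
  | n + 1 => (C (2 * ((n : ℝ) + 1)) * X + 1 - X) * B n + 2 * X * (1 - X) * derivative (B n)

lemma key : ∀ n : ℕ, ∀ x : ℝ, x ≠ -1 →
    (q n).eval x = (x + 1) ^ n * (B n).eval ((x - 1) / (x + 1)) := by
  intro n
  induction n with
  | zero => intro x hx; simp [q, B]
  | succ n ih =>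
    intro x hx
    have hx1 : x + 1 ≠ 0 := by intro h; apply hx; linarith
    set y : ℝ := (x - 1) / (x + 1) with hy
    have hev : (fun t : ℝ => (q n).eval t)
        =ᶠ[nhds x] (fun t : ℝ => (t + 1) ^ n * (B n).eval ((t - 1) / (t + 1))) := by
      filter_upwards [isOpen_ne.mem_nhds (show x ∈ {t : ℝ | t ≠ -1} from hx)] with t ht
      exact ih t ht
    have h1 : HasDerivAt (fun t : ℝ => t + 1) 1 x := (hasDerivAt_id x).add_const 1
    have h2 : HasDerivAt (fun t : ℝ => (t + 1) ^ n) ((n : ℝ) * (x + 1) ^ (n - 1) * 1) x :=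
      h1.pow n
    have hu : HasDerivAt (fun t : ℝ => (t - 1) / (t + 1)) (2 / (x + 1) ^ 2) x := by
      have ha : HasDerivAt (fun t : ℝ => t - 1) 1 x := (hasDerivAt_id x).sub_const 1
      have := ha.div h1 hx1
      refine this.congr_deriv ?_
      ring
    have hB : HasDerivAt (fun t : ℝ => (B n).eval ((t - 1) / (t + 1)))
        ((derivative (B n)).eval y * (2 / (x + 1) ^ 2)) x :=
      by have := (Polynomial.hasDerivAt (B n) ((x - 1) / (x + 1))).comp x hu; exact this
    have hf : HasDerivAt (fun t : ℝ => (t + 1) ^ n * (B n).eval ((t - 1) / (t + 1)))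
        ((n : ℝ) * (x + 1) ^ (n - 1) * 1 * (B n).eval y
          + (x + 1) ^ n * ((derivative (B n)).eval y * (2 / (x + 1) ^ 2))) x :=
      h2.mul hB
    have hqd : (derivative (q n)).eval x =
        (n : ℝ) * (x + 1) ^ (n - 1) * 1 * (B n).eval y
          + (x + 1) ^ n * ((derivative (B n)).eval y * (2 / (x + 1) ^ 2)) := by
      rw [← Polynomial.deriv, hev.deriv_eq, hf.deriv]
    have hpow : (n : ℝ) * (x + 1) ^ (n - 1) = (n : ℝ) * (x + 1) ^ n / (x + 1) := by
      cases n with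
      | zero => simp
      | succ m => rw [Nat.add_sub_cancel, pow_succ]; field_simp
    show (q (n + 1)).eval x = (x + 1) ^ (n + 1) * (B (n + 1)).eval y
    rw [show q (n + 1) = 2 * (X ^ 2 - 1) * derivative (q n) + 2 * X * q n from rfl,
        show B (n + 1) = (C (2 * ((n : ℝ) + 1)) * X + 1 - X) * B n
          + 2 * X * (1 - X) * derivative (B n) from rfl]
    simp only [eval_add, eval_mul, eval_sub, eval_pow, eval_X, eval_one, eval_ofNat, eval_C]
    rw [hqd, ih x hx, hpow, hy]
    field_simp
    ring

theorem q_eq_eulerianB (n : ℕ) (hn : 1 ≤ n) (x : ℝ) (hx : x ≠ -1) :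
    (q n).eval x = (x + 1) ^ n * (B n).eval ((x - 1) / (x + 1)) := by
  exact key n x hx
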